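/- Let p be a prime. If the relative Frobenius F^e_{A/R} : A ⊗_R F^e_*R → F^e_*A of a homomorphism of F_p-algebras R → A is an isomorphism for some e ≥ 1, then F^{e'}_{A/R} is an isomorphism for all e' ≥ 1. -/

import Mathlib

open TensorProduct

/-- `FStar p R` is `R` viewed as an `R`-algebra via the Frobenius `r ↦ r ^ p`. -/
def FStar (_p : ℕ) (R : Type*) : Type _ := R

instance (p : ℕ) (R : Type*) [CommRing R] : CommRing (FStar p R) :=
  inferInstanceAs (CommRing R)

noncomputable instance (p : ℕ) (R A : Type*) [CommRing R] [CommRing A] [Algebra R A]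
    [ExpChar A p] : Algebra R (FStar p A) :=
  ((frobenius A p).comp (algebraMap R A)).toAlgebra

/-- Frobenius of `A`, as a map `A →ₐ[R] FStar p A`. -/
noncomputable def frobAlgHom (p : ℕ) (R A : Type*) [CommRing R] [CommRing A] [Algebra R A]
    [ExpChar A p] : A →ₐ[R] FStar p A :=
  { frobenius A p with commutes' := fun _ => rfl }

/-- The structure map `F_*R → F_*A`, as a map of `R`-algebras. -/
noncomputable def fstarAlgHom (p : ℕ) (R A : Type*) [CommRing R] [CommRing A] [Algebra R A]
    [ExpChar R p] [ExpChar A p] : FStar p R →ₐ[R] FStar p A :=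
  { (algebraMap R A : R →+* A) with
    commutes' := fun r => by
      show (algebraMap R A) (frobenius R p (algebraMap R R r)) = frobenius A p (algebraMap R A r)
      simp [frobenius_def, map_pow] }

/-- The relative Frobenius `A ⊗[R] F_*R → F_*A`, `a ⊗ r ↦ a^p · r`. -/
noncomputable def relFrob (p : ℕ) (R A : Type*) [CommRing R] [CommRing A] [Algebra R A]
    [ExpChar R p] [ExpChar A p] : (A ⊗[R] FStar p R) →ₐ[R] FStar p A :=
  Algebra.TensorProduct.productMap (frobAlgHom p R A) (fstarAlgHom p R A)

/-- `FStarE p e R` is `R` viewed as an `R`-algebra via the `e`-th iterate of Frobenius. -/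
def FStarE (_p _e : ℕ) (R : Type*) : Type _ := R

instance (p e : ℕ) (R : Type*) [CommRing R] : CommRing (FStarE p e R) :=
  inferInstanceAs (CommRing R)

noncomputable instance (p e : ℕ) (R A : Type*) [CommRing R] [CommRing A] [Algebra R A]
    [ExpChar A p] : Algebra R (FStarE p e A) :=
  ((iterateFrobenius A p e).comp (algebraMap R A)).toAlgebra

/-- The `e`-th iterate of Frobenius of `A`, as a map `A →ₐ[R] FStarE p e A`. -/
noncomputable def frobAlgHomE (p e : ℕ) (R A : Type*) [CommRing R] [CommRing A] [Algebra R A]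
    [ExpChar A p] : A →ₐ[R] FStarE p e A :=
  { iterateFrobenius A p e with commutes' := fun _ => rfl }

/-- The structure map `F^e_*R → F^e_*A`, as a map of `R`-algebras. -/
noncomputable def fstarAlgHomE (p e : ℕ) (R A : Type*) [CommRing R] [CommRing A] [Algebra R A]
    [ExpChar R p] [ExpChar A p] : FStarE p e R →ₐ[R] FStarE p e A :=
  { (algebraMap R A : R →+* A) with
    commutes' := fun r => by
      show (algebraMap R A) (iterateFrobenius R p e (algebraMap R R r))
          = iterateFrobenius A p e (algebraMap R A r)
      simp [iterateFrobenius_def, map_pow] }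

/-- The `e`-th relative Frobenius `A ⊗[R] F^e_*R → F^e_*A`, `a ⊗ r ↦ a^{p^e} · r`. -/
noncomputable def relFrobE (p e : ℕ) (R A : Type*) [CommRing R] [CommRing A] [Algebra R A]
    [ExpChar R p] [ExpChar A p] : (A ⊗[R] FStarE p e R) →ₐ[R] FStarE p e A :=
  Algebra.TensorProduct.productMap (frobAlgHomE p e R A) (fstarAlgHomE p e R A)

def toE (p e : ℕ) (R : Type*) (r : R) : FStarE p e R := r

def ofE (p e : ℕ) (R : Type*) (a : FStarE p e R) : R := a

section Aux
set_option linter.unusedSectionVars false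

variable (p : ℕ) (R A : Type*) [CommRing R] [CommRing A] [Algebra R A]
  [ExpChar R p] [ExpChar A p]

lemma relFrobE_tmul (e : ℕ) (a : A) (r : FStarE p e R) :
    relFrobE p e R A (a ⊗ₜ[R] r) = toE p e A (a ^ p ^ e * algebraMap R A (ofE p e R r)) := by
  show (Algebra.TensorProduct.productMap (frobAlgHomE p e R A) (fstarAlgHomE p e R A))
      (a ⊗ₜ[R] r) = _
  rw [Algebra.TensorProduct.productMap_apply_tmul]
  show toE p e A (iterateFrobenius A p e a) * toE p e A (algebraMap R A (ofE p e R r))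
      = toE p e A (a ^ p ^ e * algebraMap R A (ofE p e R r))
  rw [iterateFrobenius_def]
  rfl

lemma smul_fstarE (e : ℕ) (s : R) (r : FStarE p e R) :
    s • r = toE p e R (s ^ p ^ e) * r := by
  rw [Algebra.smul_def]
  show iterateFrobenius R p e (algebraMap R R s) * (ofE p e R r) = s ^ p ^ e * (ofE p e R r)
  rw [iterateFrobenius_def]
  norm_num

lemma tmul_shift (j : ℕ) (a : A) (s : R) (r : FStarE p j R) :
    (a ⊗ₜ[R] (toE p j R (s ^ p ^ j) * r) : A ⊗[R] FStarE p j R)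
      = (algebraMap R A s * a) ⊗ₜ[R] r := by
  rw [← smul_fstarE, TensorProduct.tmul_smul, TensorProduct.smul_tmul', Algebra.smul_def]

/-- `a ↦ a^{p^k} ⊗ r` : the map `A ⊗ F^{k+1}R → A ⊗ F^1 R` (base change of `F^k` along Frobenius). -/
noncomputable def alphaE (k : ℕ) : (A ⊗[R] FStarE p (k + 1) R) →+ (A ⊗[R] FStarE p 1 R) :=
  TensorProduct.liftAddHom
    (AddMonoidHom.mk' (fun a => AddMonoidHom.mk'
        (fun r => iterateFrobenius A p k a ⊗ₜ[R] toE p 1 R (ofE p (k + 1) R r))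
        (fun r r' => TensorProduct.tmul_add _ _ _))
      (fun a b => AddMonoidHom.ext fun r => by
        show iterateFrobenius A p k (a + b) ⊗ₜ[R] _
            = iterateFrobenius A p k a ⊗ₜ[R] _ + iterateFrobenius A p k b ⊗ₜ[R] _
        rw [map_add, TensorProduct.add_tmul]))
    (fun s a r => by
      show iterateFrobenius A p k (s • a) ⊗ₜ[R] toE p 1 R (ofE p (k + 1) R r)
          = iterateFrobenius A p k a ⊗ₜ[R] toE p 1 R (ofE p (k + 1) R (s • r))
      rw [iterateFrobenius_def, iterateFrobenius_def, smul_pow, TensorProduct.smul_tmul,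
        smul_fstarE, smul_fstarE]
      congr 1
      show (s ^ p ^ k) ^ p ^ 1 * ofE p (k + 1) R r = s ^ p ^ (k + 1) * ofE p (k + 1) R r
      rw [pow_one, ← pow_mul, ← pow_succ])

lemma alphaE_tmul (k : ℕ) (a : A) (r : FStarE p (k + 1) R) :
    alphaE p R A k (a ⊗ₜ[R] r)
      = iterateFrobenius A p k a ⊗ₜ[R] toE p 1 R (ofE p (k + 1) R r) := rfl

/-- `a ↦ a^p ⊗ r` : the map `A ⊗ F^{k+1}R → A ⊗ F^k R` (base change of `F^1`). -/
noncomputable def betaE (k : ℕ) : (A ⊗[R] FStarE p (k + 1) R) →+ (A ⊗[R] FStarE p k R) :=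
  TensorProduct.liftAddHom
    (AddMonoidHom.mk' (fun a => AddMonoidHom.mk'
        (fun r => frobenius A p a ⊗ₜ[R] toE p k R (ofE p (k + 1) R r))
        (fun r r' => TensorProduct.tmul_add _ _ _))
      (fun a b => AddMonoidHom.ext fun r => by
        show frobenius A p (a + b) ⊗ₜ[R] _
            = frobenius A p a ⊗ₜ[R] _ + frobenius A p b ⊗ₜ[R] _
        rw [map_add, TensorProduct.add_tmul]))
    (fun s a r => by
      show frobenius A p (s • a) ⊗ₜ[R] toE p k R (ofE p (k + 1) R r)
          = frobenius A p a ⊗ₜ[R] toE p k R (ofE p (k + 1) R (s • r))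
      rw [frobenius_def, frobenius_def, smul_pow, TensorProduct.smul_tmul,
        smul_fstarE, smul_fstarE]
      congr 1
      show (s ^ p) ^ p ^ k * ofE p (k + 1) R r = s ^ p ^ (k + 1) * ofE p (k + 1) R r
      rw [← pow_mul, ← pow_succ'])

lemma betaE_tmul (k : ℕ) (a : A) (r : FStarE p (k + 1) R) :
    betaE p R A k (a ⊗ₜ[R] r)
      = frobenius A p a ⊗ₜ[R] toE p k R (ofE p (k + 1) R r) := rfl

/-- `b ⊗ s ↦ b ⊗ s^p·c` : a map `A ⊗ F^k R → A ⊗ F^{k+1}R`. -/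
noncomputable def nuE (k : ℕ) (c : R) :
    (A ⊗[R] FStarE p k R) →+ (A ⊗[R] FStarE p (k + 1) R) :=
  TensorProduct.liftAddHom
    (AddMonoidHom.mk' (fun b => AddMonoidHom.mk'
        (fun s => b ⊗ₜ[R] toE p (k + 1) R ((ofE p k R s) ^ p * c))
        (fun s s' => by
          show b ⊗ₜ[R] toE p (k + 1) R ((ofE p k R s + ofE p k R s') ^ p * c) = _
          rw [add_pow_expChar, add_mul]
          exact TensorProduct.tmul_add _ _ _))
      (fun b b' => AddMonoidHom.ext fun s => TensorProduct.add_tmul _ _ _))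
    (fun t b s => by
      show (t • b) ⊗ₜ[R] toE p (k + 1) R ((ofE p k R s) ^ p * c)
          = b ⊗ₜ[R] toE p (k + 1) R ((ofE p k R (t • s)) ^ p * c)
      rw [TensorProduct.smul_tmul, smul_fstarE, smul_fstarE]
      congr 1
      show t ^ p ^ (k + 1) * ((ofE p k R s) ^ p * c)
          = (t ^ p ^ k * ofE p k R s) ^ p * c
      rw [mul_pow, ← pow_mul, ← pow_succ, mul_assoc])

lemma nuE_tmul (k : ℕ) (c : R) (b : A) (s : FStarE p k R) :
    nuE p R A k c (b ⊗ₜ[R] s) = b ⊗ₜ[R] toE p (k + 1) R ((ofE p k R s) ^ p * c) := rfl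

/-- `b ⊗ s ↦ b ⊗ s^{p^k}·c` : a map `A ⊗ F^1 R → A ⊗ F^{k+1}R`. -/
noncomputable def muE (k : ℕ) (c : R) :
    (A ⊗[R] FStarE p 1 R) →+ (A ⊗[R] FStarE p (k + 1) R) :=
  TensorProduct.liftAddHom
    (AddMonoidHom.mk' (fun b => AddMonoidHom.mk'
        (fun s => b ⊗ₜ[R] toE p (k + 1) R ((ofE p 1 R s) ^ p ^ k * c))
        (fun s s' => by
          show b ⊗ₜ[R] toE p (k + 1) R ((ofE p 1 R s + ofE p 1 R s') ^ p ^ k * c) = _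
          rw [add_pow_expChar_pow, add_mul]
          exact TensorProduct.tmul_add _ _ _))
      (fun b b' => AddMonoidHom.ext fun s => TensorProduct.add_tmul _ _ _))
    (fun t b s => by
      show (t • b) ⊗ₜ[R] toE p (k + 1) R ((ofE p 1 R s) ^ p ^ k * c)
          = b ⊗ₜ[R] toE p (k + 1) R ((ofE p 1 R (t • s)) ^ p ^ k * c)
      rw [TensorProduct.smul_tmul, smul_fstarE, smul_fstarE]
      congr 1
      show t ^ p ^ (k + 1) * ((ofE p 1 R s) ^ p ^ k * c)
          = (t ^ p ^ 1 * ofE p 1 R s) ^ p ^ k * c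
      rw [mul_pow, ← pow_mul, pow_one, ← pow_succ', mul_assoc])

lemma muE_tmul (k : ℕ) (c : R) (b : A) (s : FStarE p 1 R) :
    muE p R A k c (b ⊗ₜ[R] s) = b ⊗ₜ[R] toE p (k + 1) R ((ofE p 1 R s) ^ p ^ k * c) := rfl

/-- Factorization `F^{k+1} = F^1 ∘ α_k`. -/
lemma relFrobE_eq_one_alpha (k : ℕ) (x : A ⊗[R] FStarE p (k + 1) R) :
    relFrobE p (k + 1) R A x = (relFrobE p 1 R A (alphaE p R A k x) : FStarE p 1 A) := by
  induction x using TensorProduct.induction_on with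
  | zero => rw [map_zero, map_zero, map_zero]; rfl
  | tmul a r =>
      rw [relFrobE_tmul, alphaE_tmul, relFrobE_tmul]
      show toE p (k + 1) A (a ^ p ^ (k + 1) * algebraMap R A (ofE p (k + 1) R r))
          = toE p 1 A ((iterateFrobenius A p k a) ^ p ^ 1 * algebraMap R A (ofE p (k + 1) R r))
      rw [iterateFrobenius_def, pow_one, ← pow_mul, ← pow_succ]
      rfl
  | add x y hx hy => rw [map_add, map_add, map_add, hx, hy]; rfl

/-- Factorization `F^{k+1} = F^k ∘ β_k`. -/
lemma relFrobE_eq_beta (k : ℕ) (x : A ⊗[R] FStarE p (k + 1) R) :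
    relFrobE p (k + 1) R A x = (relFrobE p k R A (betaE p R A k x) : FStarE p k A) := by
  induction x using TensorProduct.induction_on with
  | zero => rw [map_zero, map_zero, map_zero]; rfl
  | tmul a r =>
      rw [relFrobE_tmul, betaE_tmul, relFrobE_tmul]
      show toE p (k + 1) A (a ^ p ^ (k + 1) * algebraMap R A (ofE p (k + 1) R r))
          = toE p k A ((frobenius A p a) ^ p ^ k * algebraMap R A (ofE p (k + 1) R r))
      rw [frobenius_def, ← pow_mul, ← pow_succ']
      rfl
  | add x y hx hy => rw [map_add, map_add, map_add, hx, hy]; rfl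

/-- Surjectivity descends to smaller exponents. -/
lemma relFrobE_surj_of_le (e e' : ℕ) (h : e' ≤ e)
    (hs : Function.Surjective (relFrobE p e R A)) :
    Function.Surjective (relFrobE p e' R A) := by
  have key : ∀ x : A ⊗[R] FStarE p e R, ∃ y : A ⊗[R] FStarE p e' R,
      relFrobE p e' R A y = (relFrobE p e R A x : FStarE p e' A) := by
    intro x
    induction x using TensorProduct.induction_on with
    | zero => exact ⟨0, by rw [map_zero, map_zero]; rfl⟩
    | tmul a r =>
        refine ⟨(a ^ p ^ (e - e')) ⊗ₜ[R] toE p e' R (ofE p e R r), ?_⟩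
        rw [relFrobE_tmul, relFrobE_tmul]
        show toE p e' A ((a ^ p ^ (e - e')) ^ p ^ e' * algebraMap R A (ofE p e R r))
            = toE p e A (a ^ p ^ e * algebraMap R A (ofE p e R r))
        rw [← pow_mul, ← pow_add, Nat.sub_add_cancel h]
        rfl
    | add x y hx hy =>
        obtain ⟨y1, h1⟩ := hx
        obtain ⟨y2, h2⟩ := hy
        exact ⟨y1 + y2, by rw [map_add, map_add, h1, h2]; rfl⟩
  intro b
  obtain ⟨x, hx⟩ := hs (toE p e A (ofE p e' A b))
  obtain ⟨y, hy⟩ := key x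
  exact ⟨y, hy.trans hx⟩

/-- `α_k ∘ ν_c` computes `F^k` on the first factor. -/
lemma alpha_nu (k : ℕ) (c : R) (y : A ⊗[R] FStarE p k R) :
    alphaE p R A k (nuE p R A k c y)
      = ofE p k A (relFrobE p k R A y) ⊗ₜ[R] toE p 1 R c := by
  induction y using TensorProduct.induction_on with
  | zero =>
      rw [map_zero, map_zero, map_zero]
      exact (TensorProduct.zero_tmul _ _).symm
  | tmul b s =>
      rw [nuE_tmul, alphaE_tmul, relFrobE_tmul, iterateFrobenius_def]
      have h2 : toE p 1 R (ofE p (k + 1) R (toE p (k + 1) R (ofE p k R s ^ p * c)))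
          = toE p 1 R ((ofE p k R s) ^ p ^ 1) * toE p 1 R c := by
        show (ofE p k R s) ^ p * c = (ofE p k R s) ^ p ^ 1 * c
        rw [pow_one]
      rw [h2, tmul_shift, mul_comm (algebraMap R A (ofE p k R s))]
      rfl
  | add x y hx hy =>
      rw [map_add, map_add, hx, hy, map_add]
      exact (TensorProduct.add_tmul _ _ _).symm

lemma alpha_surj (k : ℕ) (hk : Function.Surjective (relFrobE p k R A)) :
    Function.Surjective (alphaE p R A k) := by
  intro z
  induction z using TensorProduct.induction_on with
  | zero => exact ⟨0, map_zero _⟩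
  | tmul a c =>
      obtain ⟨y, hy⟩ := hk (toE p k A a)
      exact ⟨nuE p R A k (ofE p 1 R c) y, by rw [alpha_nu, hy]; rfl⟩
  | add x y hx hy =>
      obtain ⟨x', h1⟩ := hx
      obtain ⟨y', h2⟩ := hy
      exact ⟨x' + y', by rw [map_add, h1, h2]⟩

lemma mu_add (k : ℕ) (c c' : R) (x : A ⊗[R] FStarE p 1 R) :
    muE p R A k (c + c') x = muE p R A k c x + muE p R A k c' x := by
  induction x using TensorProduct.induction_on with
  | zero => rw [map_zero, map_zero, map_zero, add_zero]
  | tmul b s =>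
      rw [muE_tmul, muE_tmul, muE_tmul,
        show toE p (k + 1) R ((ofE p 1 R s) ^ p ^ k * (c + c'))
          = toE p (k + 1) R ((ofE p 1 R s) ^ p ^ k * c)
            + toE p (k + 1) R ((ofE p 1 R s) ^ p ^ k * c') from mul_add (R := R) _ _ _]
      exact TensorProduct.tmul_add _ _ _
  | add x y hx hy => rw [map_add, map_add, map_add, hx, hy]; abel

lemma mu_one_tmul_mul (k : ℕ) (c s : R) (x : A ⊗[R] FStarE p 1 R) :
    muE p R A k c (((1 : A) ⊗ₜ[R] toE p 1 R s) * x) = muE p R A k (s ^ p ^ k * c) x := by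
  induction x using TensorProduct.induction_on with
  | zero => rw [mul_zero, map_zero, map_zero]
  | tmul b t =>
      rw [Algebra.TensorProduct.tmul_mul_tmul, one_mul, muE_tmul, muE_tmul]
      congr 1
      show (s * ofE p 1 R t) ^ p ^ k * c = (ofE p 1 R t) ^ p ^ k * (s ^ p ^ k * c)
      rw [mul_pow]; ring
  | add x y hx hy => rw [mul_add, map_add, hx, hy, map_add]

lemma beta_bij (k : ℕ) (h1 : Function.Bijective (relFrobE p 1 R A)) :
    Function.Bijective (betaE p R A k) := by
  set Φ := RingEquiv.ofBijective (relFrobE p 1 R A) h1 with hPhi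
  have fact1 : ∀ x, Φ.symm (relFrobE p 1 R A x) = x := fun x => Φ.symm_apply_apply x
  have fact2 : ∀ b, relFrobE p 1 R A (Φ.symm b) = b := fun b => Φ.apply_symm_apply b
  have iota_smul : ∀ (s : R) (b : FStarE p 1 A),
      Φ.symm (toE p 1 A (algebraMap R A s) * b)
        = ((1 : A) ⊗ₜ[R] toE p 1 R s) * Φ.symm b := by
    intro s b
    have hX : relFrobE p 1 R A ((1 : A) ⊗ₜ[R] toE p 1 R s)
        = toE p 1 A (algebraMap R A s) := by
      rw [relFrobE_tmul]
      show toE p 1 A (1 ^ p ^ 1 * algebraMap R A s) = _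
      rw [one_pow, one_mul]
    rw [← hX, map_mul, fact1]
  let ψ : (A ⊗[R] FStarE p k R) →+ (A ⊗[R] FStarE p (k + 1) R) :=
    TensorProduct.liftAddHom
      (AddMonoidHom.mk' (fun a => AddMonoidHom.mk'
          (fun r => muE p R A k (ofE p k R r) (Φ.symm (toE p 1 A a)))
          (fun r r' => mu_add p R A k (ofE p k R r) (ofE p k R r') _))
        (fun a a' => AddMonoidHom.ext fun r => by
          show muE p R A k (ofE p k R r) (Φ.symm (toE p 1 A (a + a'))) = _
          rw [show toE p 1 A (a + a') = toE p 1 A a + toE p 1 A a' from rfl,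
            map_add, map_add]
          rfl))
      (fun s a r => by
        show muE p R A k (ofE p k R r) (Φ.symm (toE p 1 A (s • a)))
            = muE p R A k (ofE p k R (s • r)) (Φ.symm (toE p 1 A a))
        rw [show toE p 1 A (s • a) = toE p 1 A (algebraMap R A s) * toE p 1 A a from by
          rw [Algebra.smul_def]; rfl]
        rw [iota_smul, mu_one_tmul_mul, smul_fstarE]
        rfl)
  have beta_mu : ∀ (c : R) (x : A ⊗[R] FStarE p 1 R),
      betaE p R A k (muE p R A k c x)
        = ofE p 1 A (relFrobE p 1 R A x) ⊗ₜ[R] toE p k R c := by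
    intro c x
    induction x using TensorProduct.induction_on with
    | zero => rw [map_zero, map_zero, map_zero]; exact (TensorProduct.zero_tmul _ _).symm
    | tmul b t =>
        rw [muE_tmul, betaE_tmul, relFrobE_tmul, frobenius_def]
        rw [show toE p k R (ofE p (k + 1) R (toE p (k + 1) R ((ofE p 1 R t) ^ p ^ k * c)))
            = toE p k R ((ofE p 1 R t) ^ p ^ k) * toE p k R c from rfl]
        rw [tmul_shift, mul_comm (algebraMap R A (ofE p 1 R t)), pow_one p]
        rfl
    | add x y hx hy =>
        rw [map_add, map_add, hx, hy, map_add]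
        exact (TensorProduct.add_tmul _ _ _).symm
  have hbpsi : ∀ x, betaE p R A k (ψ x) = x := by
    intro x
    induction x using TensorProduct.induction_on with
    | zero => rw [map_zero, map_zero]
    | tmul a r =>
        show betaE p R A k (muE p R A k (ofE p k R r) (Φ.symm (toE p 1 A a))) = a ⊗ₜ[R] r
        rw [beta_mu, fact2]
        rfl
    | add x y hx hy => rw [map_add, map_add, hx, hy]
  have hpsib : ∀ x, ψ (betaE p R A k x) = x := by
    intro x
    induction x using TensorProduct.induction_on with
    | zero => rw [map_zero, map_zero]
    | tmul a r =>
        rw [betaE_tmul]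
        show muE p R A k (ofE p k R (toE p k R (ofE p (k + 1) R r)))
            (Φ.symm (toE p 1 A (frobenius A p a))) = a ⊗ₜ[R] r
        have ha : toE p 1 A (frobenius A p a)
            = relFrobE p 1 R A (a ⊗ₜ[R] (1 : FStarE p 1 R)) := by
          rw [relFrobE_tmul, show ofE p 1 R (1 : FStarE p 1 R) = (1 : R) from rfl,
            map_one, mul_one, frobenius_def, pow_one p]
        rw [ha, fact1, muE_tmul]
        congr 1
        show (1 : R) ^ p ^ k * ofE p (k + 1) R r = ofE p (k + 1) R r
        rw [one_pow, one_mul]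
    | add x y hx hy => rw [map_add, map_add, hx, hy]
  exact Function.bijective_iff_has_inverse.mpr ⟨ψ, hpsib, hbpsi⟩

end Aux

/-- if the `e`-th relative Frobenius of `R → A` is an isomorphism for some
`e ≥ 1`, then it is an isomorphism for all `e' ≥ 1`. -/
theorem stmt_5 (p : ℕ) [Fact p.Prime] (R A : Type*) [CommRing R] [CommRing A] [Algebra R A]
    [CharP R p] [CharP A p]
    (he : ∃ e ≥ 1, Function.Bijective (relFrobE p e R A)) :
    ∀ e' ≥ 1, Function.Bijective (relFrobE p e' R A) := by
  obtain ⟨e, he1, hbij⟩ := he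
  obtain ⟨k, rfl⟩ : ∃ k, e = k + 1 := ⟨e - 1, by omega⟩
  have hsurj1 : Function.Surjective (relFrobE p 1 R A) :=
    relFrobE_surj_of_le p R A (k + 1) 1 (by omega) hbij.surjective
  have hsurjk : Function.Surjective (relFrobE p k R A) :=
    relFrobE_surj_of_le p R A (k + 1) k (by omega) hbij.surjective
  have has : Function.Surjective (alphaE p R A k) := alpha_surj p R A k hsurjk
  have h1 : Function.Bijective (relFrobE p 1 R A) := by
    refine ⟨?_, hsurj1⟩
    intro x y hxy
    obtain ⟨x', rfl⟩ := has x
    obtain ⟨y', rfl⟩ := has y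
    rw [← relFrobE_eq_one_alpha, ← relFrobE_eq_one_alpha] at hxy
    rw [hbij.injective hxy]
  intro e' he'
  obtain ⟨m, rfl⟩ : ∃ m, e' = m + 1 := ⟨e' - 1, by omega⟩
  clear he'
  induction m with
  | zero => exact h1
  | succ n ih =>
      have hb := beta_bij p R A (n + 1) h1
      constructor
      · intro x y hxy
        rw [relFrobE_eq_beta, relFrobE_eq_beta p R A (n + 1) y] at hxy
        exact hb.injective (ih.injective hxy)
      · intro b
        obtain ⟨y, hy⟩ := ih.surjective (toE p (n + 1) A (ofE p (n + 1 + 1) A b))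
        obtain ⟨x, hx⟩ := hb.surjective y
        refine ⟨x, ?_⟩
        rw [relFrobE_eq_beta, hx, hy]
        rfl
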